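/- Chen–Chu–Gu finite quintuple form: for every nonnegative integer n, ∑_{k=0}^n (1 + z q^k) · [n choose k]_q · (z;q)_{n+1} / (z² q^k;q)_{n+1} · z^k q^{k²} = 1. -/

import Mathlib

/-- The q-shifted factorial `(x;q)_n`. -/
def qPoch {K : Type*} [Field K] (q x : K) (n : ℕ) : K :=
  ∏ j ∈ Finset.range n, (1 - x * q ^ j)

/-- The Gaussian binomial coefficient `[n choose k]_q`, zero for `k > n`. -/
def qBinom {K : Type*} [Field K] (q : K) (n k : ℕ) : K :=
  if k ≤ n then qPoch q q n / (qPoch q q k * qPoch q q (n - k)) else 0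

section Aux

variable {K : Type*} [Field K]

def ccgT (q z : K) (n k : ℕ) : K :=
  (1 + z * q ^ k) * qBinom q n k *
    (qPoch q z (n + 1) / qPoch q (z ^ 2 * q ^ k) (n + 1)) * z ^ k * q ^ (k ^ 2)

def ccgG (q z : K) (n : ℕ) : ℕ → K
  | 0 => 0
  | (k + 1) => -(q ^ (n + 1 + (k + 1) * k) * qBinom q n k * z ^ (k + 1) *
      (qPoch q z (n + 1) / qPoch q (z ^ 2 * q ^ (k + 1)) (n + 1)))

lemma qPoch_succ (q x : K) (n : ℕ) :
    qPoch q x (n + 1) = qPoch q x n * (1 - x * q ^ n) :=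
  Finset.prod_range_succ _ _

lemma qPoch_shift (q x : K) (n : ℕ) :
    qPoch q x (n + 1) = (1 - x) * qPoch q (x * q) n := by
  unfold qPoch
  rw [Finset.prod_range_succ']
  rw [mul_comm]
  congr 1
  · simp
  · apply Finset.prod_congr rfl
    intro i _
    ring

lemma qPoch_q_factor {q : K} {N : ℕ} (h : qPoch q q N ≠ 0) {j : ℕ} (hj : j < N) :
    1 - q * q ^ j ≠ 0 := by
  rw [qPoch, Finset.prod_ne_zero_iff] at h
  exact h j (Finset.mem_range.mpr hj)

lemma qPoch_q_ne_of_le {q : K} {N : ℕ} (h : qPoch q q N ≠ 0) {c : ℕ} (hc : c ≤ N) :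
    qPoch q q c ≠ 0 := by
  rw [qPoch, Finset.prod_ne_zero_iff] at h ⊢
  intro j hj
  exact h j (Finset.mem_range.mpr (lt_of_lt_of_le (Finset.mem_range.mp hj) hc))

lemma qPoch_z2_ne {q z : K} (hz : ∀ j : ℕ, 1 - z ^ 2 * q ^ j ≠ 0) (k m : ℕ) :
    qPoch q (z ^ 2 * q ^ k) m ≠ 0 := by
  rw [qPoch, Finset.prod_ne_zero_iff]
  intro j _
  have := hz (k + j)
  rw [pow_add] at this
  rwa [mul_assoc]

lemma hz' {q z : K} (hz : ∀ j : ℕ, 1 - z ^ 2 * q ^ j ≠ 0) (a b : ℕ) :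
    1 - z ^ 2 * q ^ a * q ^ b ≠ 0 := by
  have := hz (a + b)
  rw [pow_add] at this
  rwa [mul_assoc]

set_option maxHeartbeats 2000000 in
lemma ccg_key (q z : K) (hz : ∀ j : ℕ, 1 - z ^ 2 * q ^ j ≠ 0) (n k : ℕ)
    (hk : k ≤ n + 1) (hQ : qPoch q q (n + 1) ≠ 0) :
    ccgT q z (n + 1) k - ccgT q z n k = ccgG q z n (k + 1) - ccgG q z n k := by
  have hb0 : qBinom q n (n + 1) = 0 := if_neg (by omega)
  rcases Nat.eq_or_lt_of_le hk with hkn | hkn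
  · -- k = n + 1
    subst hkn
    simp only [ccgT, ccgG, hb0, mul_zero, zero_mul, neg_zero, zero_sub, sub_zero]
    rw [qBinom, if_pos le_rfl, qBinom, if_pos le_rfl, Nat.sub_self, Nat.sub_self]
    rw [qPoch_succ q z (n + 1), qPoch_succ q (z ^ 2 * q ^ (n + 1)) (n + 1)]
    have hD : qPoch q (z ^ 2 * q ^ (n + 1)) (n + 1) ≠ 0 := qPoch_z2_ne hz _ _
    have hα : 1 - z ^ 2 * q ^ (n + 1) * q ^ (n + 1) ≠ 0 := hz' hz _ _
    have hQn : qPoch q q n ≠ 0 := qPoch_q_ne_of_le hQ (Nat.le_succ n)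
    have h0 : qPoch q q 0 = 1 := by simp [qPoch]
    rw [h0]
    field_simp
    have hα2 : 1 - z ^ 2 * q ^ 2 * q ^ (n * 2) ≠ 0 := by convert hα using 2; ring
    have h3 := mul_inv_cancel₀ hα2
    ring_nf at h3 ⊢
    linear_combination (z * z ^ n * q * q ^ (n * 2) * q ^ n ^ 2 * qPoch q z (1 + n)) * h3
  · -- k ≤ n
    have hk' : k ≤ n := by omega
    rcases k with _ | c
    · -- k = 0
      simp only [ccgT, ccgG, pow_zero, mul_one, one_mul, zero_mul, sub_zero]
      have h1z : (1 : K) - z ^ 2 ≠ 0 := by have := hz 0; simpa using this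
      have hD : qPoch q (z ^ 2) (n + 1) ≠ 0 := by
        have := qPoch_z2_ne hz 0 (n + 1); simpa using this
      have hα : 1 - z ^ 2 * q ^ (n + 1) ≠ 0 := hz (n + 1)
      have hD1 : qPoch q (z ^ 2 * q ^ (0 + 1)) (n + 1)
          = qPoch q (z ^ 2) (n + 1) * (1 - z ^ 2 * q ^ (n + 1)) / (1 - z ^ 2) := by
        rw [eq_div_iff h1z]
        have e1 := qPoch_succ q (z ^ 2) (n + 1)
        have e2 := qPoch_shift q (z ^ 2) (n + 1)
        rw [pow_one]
        linear_combination e1 - e2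
      rw [hD1]
      rw [qBinom, if_pos (Nat.zero_le _), qBinom, if_pos (Nat.zero_le _),
        Nat.sub_zero, Nat.sub_zero]
      have h0 : qPoch q q 0 = 1 := by simp [qPoch]
      rw [h0]
      rw [qPoch_succ q z (n + 1), qPoch_succ q (z ^ 2) (n + 1)]
      have hQn : qPoch q q n ≠ 0 := qPoch_q_ne_of_le hQ (Nat.le_succ n)
      field_simp
      ring
    · -- 1 ≤ k = c+1 ≤ n
      obtain ⟨m, rfl⟩ : ∃ m, n = c + 1 + m := ⟨n - (c + 1), by omega⟩
      simp only [ccgT, ccgG]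
      rw [qBinom, if_pos (by omega : c + 1 ≤ c + 1 + m + 1),
          qBinom, if_pos (by omega : c + 1 ≤ c + 1 + m),
          qBinom, if_pos (by omega : c ≤ c + 1 + m)]
      have s1 : c + 1 + m + 1 - (c + 1) = m + 1 := by omega
      have s2 : c + 1 + m - (c + 1) = m := by omega
      have s3 : c + 1 + m - c = m + 1 := by omega
      rw [s1, s2, s3]
      have h1z : 1 - z ^ 2 * q ^ (c + 1) ≠ 0 := hz (c + 1)
      have hα : 1 - z ^ 2 * q ^ (c + 1) * q ^ (c + 1 + m + 1) ≠ 0 := hz' hz _ _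
      have hEne : qPoch q (z ^ 2 * q ^ (c + 1)) (c + 1 + m + 2) ≠ 0 := qPoch_z2_ne hz _ _
      have hA : qPoch q (z ^ 2 * q ^ (c + 1)) (c + 1 + m + 1)
          = qPoch q (z ^ 2 * q ^ (c + 1)) (c + 1 + m + 2)
            / (1 - z ^ 2 * q ^ (c + 1) * q ^ (c + 1 + m + 1)) := by
        rw [eq_div_iff hα]
        exact (qPoch_succ q (z ^ 2 * q ^ (c + 1)) (c + 1 + m + 1)).symm
      have hB : qPoch q (z ^ 2 * q ^ (c + 1 + 1)) (c + 1 + m + 1)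
          = qPoch q (z ^ 2 * q ^ (c + 1)) (c + 1 + m + 2) / (1 - z ^ 2 * q ^ (c + 1)) := by
        rw [eq_div_iff h1z]
        have e2 := qPoch_shift q (z ^ 2 * q ^ (c + 1)) (c + 1 + m + 1)
        have e3 : z ^ 2 * q ^ (c + 1) * q = z ^ 2 * q ^ (c + 1 + 1) := by ring
        rw [e3] at e2
        linear_combination -e2
      rw [hA, hB]
      simp only [div_div_eq_mul_div]
      rw [qPoch_succ q z (c + 1 + m + 1), qPoch_succ q q (c + 1 + m),
          qPoch_succ q q c, qPoch_succ q q m]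
      have hQc : qPoch q q c ≠ 0 := qPoch_q_ne_of_le hQ (by omega)
      have hQm : qPoch q q m ≠ 0 := qPoch_q_ne_of_le hQ (by omega)
      have h1c : 1 - q * q ^ c ≠ 0 := qPoch_q_factor hQ (by omega)
      have h1m : 1 - q * q ^ m ≠ 0 := qPoch_q_factor hQ (by omega)
      generalize qPoch q z (c + 1 + m + 1) = P
      generalize qPoch q q (c + 1 + m) = Qn
      generalize hQc' : qPoch q q c = Qc at hQc
      generalize hQm' : qPoch q q m = Qm at hQm
      generalize hE' : qPoch q (z ^ 2 * q ^ (c + 1)) (c + 1 + m + 2) = E at hEne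
      field_simp [hQc, hQm, hEne, h1c, h1m]
      ring

end Aux

lemma ccg_aux {K : Type*} [Field K] (q z : K) (hz : ∀ j : ℕ, 1 - z ^ 2 * q ^ j ≠ 0) :
    ∀ n : ℕ, qPoch q q n ≠ 0 → ∑ k ∈ Finset.range (n + 1), ccgT q z n k = 1 := by
  intro n
  induction n with
  | zero =>
    intro _
    rw [Finset.sum_range_one]
    have h1z : (1 : K) - z ^ 2 ≠ 0 := by have := hz 0; simpa using this
    simp only [ccgT, qBinom, if_pos le_rfl, pow_zero, mul_one, one_mul]
    have h0 : qPoch q q 0 = 1 := by simp [qPoch]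
    have h1 : qPoch q z 1 = 1 - z := by simp [qPoch]
    have h2 : qPoch q (z ^ 2) (0 + 1) = 1 - z ^ 2 := by simp [qPoch]
    rw [Nat.sub_self, h0, h1, h2]
    field_simp
    ring
  | succ n ih =>
    intro hQ
    have hQn : qPoch q q n ≠ 0 := qPoch_q_ne_of_le hQ (Nat.le_succ n)
    have hb0 : qBinom q n (n + 1) = 0 := if_neg (by omega)
    have e1 : ∑ k ∈ Finset.range (n + 2), ccgT q z (n + 1) k
        = ∑ k ∈ Finset.range (n + 2),
            (ccgT q z n k + (ccgG q z n (k + 1) - ccgG q z n k)) := by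
      refine Finset.sum_congr rfl fun k hk => ?_
      have h := ccg_key q z hz n k (by have := Finset.mem_range.mp hk; omega) hQ
      linear_combination h
    rw [e1, Finset.sum_add_distrib, Finset.sum_range_sub (f := ccgG q z n)]
    have e2 : ccgG q z n (n + 2) = 0 := by
      show -(q ^ (n + 1 + (n + 1 + 1) * (n + 1)) * qBinom q n (n + 1) * z ^ (n + 1 + 1) *
        (qPoch q z (n + 1) / qPoch q (z ^ 2 * q ^ (n + 1 + 1)) (n + 1))) = 0
      rw [hb0]
      ring
    have e3 : ccgG q z n 0 = 0 := rfl
    have e4 : ccgT q z n (n + 1) = 0 := by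
      simp only [ccgT, hb0]
      ring
    rw [e2, e3, Finset.sum_range_succ, e4, ih hQn]
    ring

/-- The Chen–Chu–Gu finite form of Watson's quintuple product identity. -/
theorem finite_quintuple_ccg {K : Type*} [Field K] (q z : K) (n : ℕ)
    (hq : q ≠ 0) (hqq : qPoch q q n ≠ 0)
    (hz : ∀ j : ℕ, 1 - z ^ 2 * q ^ j ≠ 0) :
    ∑ k ∈ Finset.range (n + 1),
      (1 + z * q ^ k) * qBinom q n k *
        (qPoch q z (n + 1) / qPoch q (z ^ 2 * q ^ k) (n + 1)) *
        z ^ k * q ^ (k ^ 2)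
    = 1 := by
  have h := ccg_aux q z hz n hqq
  simpa [ccgT] using h
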